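/- Let M ∈ ℝ^{J×L}, Y ∈ ℝ^J, and consider the iterative soft-thresholding iteration A^{j+1} = S_{sα}(A^j − s Mᵗ(M A^j − Y)) with constant step s = 1/‖M‖², where ‖M‖ is the spectral norm. Then each iterate A^{j+1} is the unique minimizer of the surrogate functional A ↦ (1/2)‖MA − Y‖² + α‖A‖₁ + (1/(2s))‖A − A^j‖² − (1/2)‖M(A − A^j)‖², and the objective Φ(A) = (1/2)‖MA − Y‖² + α‖A‖₁ is non-increasing along the iterates: Φ(A^{j+1}) ≤ Φ(A^j). -/

import Mathlib

open Matrix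

open RealInnerProductSpace in
private lemma key_scalar (s a g x : ℝ) (hs : 0 < s) (ha : 0 ≤ a) :
    (max (|g| - s*a) 0 * Real.sign g - g)^2
      + 2*s*a * |max (|g| - s*a) 0 * Real.sign g|
      + (x - max (|g| - s*a) 0 * Real.sign g)^2
    ≤ (x - g)^2 + 2*s*a * |x| := by
  have hsa : 0 ≤ s * a := by positivity
  by_cases h1 : s*a < g
  · have hg0 : 0 < g := lt_of_le_of_lt hsa h1
    rw [Real.sign_of_pos hg0, abs_of_pos hg0, max_eq_left (by linarith), mul_one,
      abs_of_nonneg (by linarith : (0:ℝ) ≤ g - s*a)]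
    rcases abs_cases x with ⟨hx, _⟩ | ⟨hx, hx'⟩ <;> rw [hx] <;> nlinarith [hs]
  · by_cases h2 : g < -(s*a)
    · have hg0 : g < 0 := lt_of_lt_of_le h2 (by linarith)
      rw [Real.sign_of_neg hg0, abs_of_neg hg0, max_eq_left (by linarith)]
      have : (-g - s*a) * (-1) = g + s*a := by ring
      rw [this, abs_of_neg (by linarith : g + s*a < 0)]
      rcases abs_cases x with ⟨hx, hx'⟩ | ⟨hx, _⟩ <;> rw [hx] <;> nlinarith [hs]
    · have habs : |g| ≤ s*a := abs_le.mpr ⟨not_lt.1 h2, not_lt.1 h1⟩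
      rw [max_eq_right (by linarith), zero_mul, abs_zero]
      have hxg : x * g ≤ |x| * (s*a) := by
        calc x * g ≤ |x * g| := le_abs_self _
        _ = |x| * |g| := abs_mul x g
        _ ≤ |x| * (s*a) := by nlinarith [abs_nonneg x]
      nlinarith [abs_nonneg x]

private lemma norm_sq_sum {n : ℕ} (v : EuclideanSpace ℝ (Fin n)) :
    ‖v‖ ^ 2 = ∑ l, (v l) ^ 2 := by
  rw [EuclideanSpace.norm_eq, Real.sq_sqrt (by positivity)]
  simp [Real.norm_eq_abs, sq_abs]

open RealInnerProductSpace

/-- Iterative soft thresholding with constant step `s = 1/‖M‖²` (spectral norm):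
`A^{j+1} = S_{sα}(A^j − s Mᵗ(M A^j − Y))` is the unique minimizer of the surrogate
functional `A ↦ Φ(A) + (1/(2s))‖A − A^j‖² − (1/2)‖M(A − A^j)‖²`, where
`Φ(A) = (1/2)‖MA − Y‖² + α‖A‖₁`, and `Φ` is non-increasing along the iterates:
`Φ(A^{j+1}) ≤ Φ(A^j)`. -/
theorem IST_majorization_minimization
    {J L : ℕ}
    (M : Matrix (Fin J) (Fin L) ℝ) (hM : M ≠ 0)
    (Y : EuclideanSpace ℝ (Fin J))
    (α : ℝ) (hα : 0 < α)
    (s : ℝ)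
    -- constant step s = 1/‖M‖², ‖M‖ the spectral norm (Euclidean operator norm)
    (hs : s = 1 / ‖LinearMap.toContinuousLinearMap (Matrix.toEuclideanLin M)‖ ^ 2)
    -- componentwise soft thresholding
    (Slam : ℝ → ℝ → ℝ)
    (hSlam : ∀ lam t, Slam lam t = max (|t| - lam) 0 * Real.sign t)
    (Aj g Anext : EuclideanSpace ℝ (Fin L))
    -- the proxy g = A^j − s Mᵗ(M A^j − Y)
    (hg : g = Aj - s • (Matrix.toEuclideanLin Mᵀ) ((Matrix.toEuclideanLin M) Aj - Y))
    -- the iterate A^{j+1} = S_{sα}(g)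
    (hAnext : ∀ l, Anext l = Slam (s * α) (g l))
    (Φ Ψs : EuclideanSpace ℝ (Fin L) → ℝ)
    -- the objective Φ(A) = (1/2)‖MA − Y‖² + α‖A‖₁
    (hΦ : ∀ A, Φ A = (1 / 2) * ‖(Matrix.toEuclideanLin M) A - Y‖ ^ 2 + α * ∑ l, |A l|)
    -- the surrogate functional
    (hΨ : ∀ A, Ψs A = Φ A + (1 / (2 * s)) * ‖A - Aj‖ ^ 2
        - (1 / 2) * ‖(Matrix.toEuclideanLin M) (A - Aj)‖ ^ 2) :
    -- A^{j+1} is the unique minimizer of the surrogate, and Φ is non-increasing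
    (∀ A : EuclideanSpace ℝ (Fin L), A ≠ Anext → Ψs Anext < Ψs A) ∧
    Φ Anext ≤ Φ Aj := by
  set T : EuclideanSpace ℝ (Fin L) →ₗ[ℝ] EuclideanSpace ℝ (Fin J) :=
    Matrix.toEuclideanLin M with hT
  set Tc := LinearMap.toContinuousLinearMap T with hTc
  -- positivity of ‖Tc‖ and s
  have hT0 : T ≠ 0 := by
    intro h
    exact hM (by simpa using (map_eq_zero_iff _ (Matrix.toEuclideanLin (𝕜 := ℝ)
      (m := Fin J) (n := Fin L)).injective).mp h)
  have hTc0 : Tc ≠ 0 := by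
    intro h
    exact hT0 ((map_eq_zero_iff _ (LinearMap.toContinuousLinearMap (𝕜 := ℝ)).injective).mp h)
  have hTcpos : 0 < ‖Tc‖ := norm_pos_iff.mpr hTc0
  have hs0 : 0 < s := by rw [hs]; positivity
  have h2s : 0 < 1 / (2 * s) := by positivity
  -- adjoint identity
  have hadj : ∀ (x : EuclideanSpace ℝ (Fin L)) (y : EuclideanSpace ℝ (Fin J)),
      ⟪T x, y⟫ = ⟪x, (Matrix.toEuclideanLin Mᵀ) y⟫ := by
    intro x y
    rw [← Matrix.conjTranspose_eq_transpose_of_trivial,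
      Matrix.toEuclideanLin_conjTranspose_eq_adjoint, LinearMap.adjoint_inner_right]
  have hTg : (Matrix.toEuclideanLin Mᵀ) (T Aj - Y) = (1/s) • (Aj - g) := by
    rw [hg]
    simp only [sub_sub_cancel]
    rw [smul_smul, one_div, inv_mul_cancel₀ (ne_of_gt hs0), one_smul]
  -- master identity for the surrogate
  have hkey : ∀ A : EuclideanSpace ℝ (Fin L), Ψs A
      = (1/(2*s)) * ‖A - g‖^2 + α * ∑ l, |A l|
        + ((1/2) * ‖T Aj - Y‖^2 - (1/(2*s)) * ‖Aj - g‖^2) := by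
    intro A
    rw [hΨ, hΦ]
    have e1 : T A - Y = T (A - Aj) + (T Aj - Y) := by rw [map_sub]; abel
    have e2 : ‖T A - Y‖^2
        = ‖T (A - Aj)‖^2 + 2 * ⟪T (A - Aj), T Aj - Y⟫ + ‖T Aj - Y‖^2 := by
      rw [e1]; exact norm_add_sq_real _ _
    have e3 : ⟪T (A - Aj), T Aj - Y⟫ = (1/s) * ⟪A - Aj, Aj - g⟫ := by
      rw [hadj, hTg, real_inner_smul_right]
    have e5 : ‖A - g‖^2 = ‖A - Aj‖^2 + 2 * ⟪A - Aj, Aj - g⟫ + ‖Aj - g‖^2 := by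
      rw [show A - g = (A - Aj) + (Aj - g) by abel]
      exact norm_add_sq_real _ _
    linear_combination (1/2) * e2 - (1/(2*s)) * e5 + e3
  -- coordinatewise form of the thresholded iterate
  have hAn : ∀ l, Anext l = max (|g l| - s*α) 0 * Real.sign (g l) := by
    intro l; rw [hAnext, hSlam]
  -- part 1: unique minimizer
  have part1 : ∀ A : EuclideanSpace ℝ (Fin L), A ≠ Anext → Ψs Anext < Ψs A := by
    intro A hA
    have hsum : ∑ l, ((Anext l - g l)^2 + 2*s*α * |Anext l| + (A l - Anext l)^2)
        ≤ ∑ l, ((A l - g l)^2 + 2*s*α * |A l|) := by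
      apply Finset.sum_le_sum
      intro l _
      rw [hAn l]
      exact key_scalar s α (g l) (A l) hs0 hα.le
    have hD : 0 < ∑ l, (A l - Anext l)^2 := by
      have hex : ∃ l, A l ≠ Anext l := by
        by_contra h
        push_neg at h
        exact hA (PiLp.ext h)
      obtain ⟨l, hl⟩ := hex
      exact Finset.sum_pos' (fun i _ => sq_nonneg _)
        ⟨l, Finset.mem_univ l, pow_two_pos_of_ne_zero (sub_ne_zero_of_ne hl)⟩
    -- pass to norms
    have hnormA : ‖A - g‖^2 = ∑ l, (A l - g l)^2 := by
      rw [norm_sq_sum]; simp [PiLp.sub_apply]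
    have hnormN : ‖Anext - g‖^2 = ∑ l, (Anext l - g l)^2 := by
      rw [norm_sq_sum]; simp [PiLp.sub_apply]
    rw [hkey, hkey, hnormA, hnormN]
    have hexp : ∑ l, ((Anext l - g l)^2 + 2*s*α * |Anext l| + (A l - Anext l)^2)
        = (∑ l, (Anext l - g l)^2) + 2*s*α * (∑ l, |Anext l|)
          + ∑ l, (A l - Anext l)^2 := by
      rw [Finset.sum_add_distrib, Finset.sum_add_distrib, ← Finset.mul_sum]
    have hexp2 : ∑ l, ((A l - g l)^2 + 2*s*α * |A l|)
        = (∑ l, (A l - g l)^2) + 2*s*α * (∑ l, |A l|) := by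
      rw [Finset.sum_add_distrib, ← Finset.mul_sum]
    rw [hexp, hexp2] at hsum
    have hmul := mul_le_mul_of_nonneg_left hsum h2s.le
    have hc : ∀ t : ℝ, (1/(2*s)) * (2*s*α*t) = α * t := by
      intro t; field_simp
    rw [mul_add, mul_add, mul_add, hc, hc] at hmul
    have hDpos := mul_pos h2s hD
    linarith [hmul, hDpos]
  refine ⟨part1, ?_⟩
  -- part 2: monotonicity
  have hΨAj : Ψs Aj = Φ Aj := by
    rw [hΨ, sub_self, map_zero]
    simp only [norm_zero]
    ring
  have hΨmono : Ψs Anext ≤ Ψs Aj := by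
    by_cases h : Aj = Anext
    · rw [h]
    · exact (part1 Aj h).le
  have hΦN : Φ Anext ≤ Ψs Anext := by
    rw [hΨ]
    have hcoe : Tc (Anext - Aj) = T (Anext - Aj) :=
      congrFun (LinearMap.coe_toContinuousLinearMap' T) (Anext - Aj)
    have hB : ‖T (Anext - Aj)‖ ≤ ‖Tc‖ * ‖Anext - Aj‖ := by
      rw [← hcoe]; exact Tc.le_opNorm _
    have hB2 : ‖T (Anext - Aj)‖^2 ≤ ‖Tc‖^2 * ‖Anext - Aj‖^2 := by
      have h := pow_le_pow_left₀ (norm_nonneg (T (Anext - Aj))) hB 2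
      rwa [mul_pow] at h
    have hinv : ‖Tc‖^2 * s = 1 := by
      rw [hs]; field_simp
    have h1 : ‖T (Anext - Aj)‖^2 * s ≤ ‖Anext - Aj‖^2 := by
      calc ‖T (Anext - Aj)‖^2 * s ≤ (‖Tc‖^2 * ‖Anext - Aj‖^2) * s :=
            mul_le_mul_of_nonneg_right hB2 hs0.le
        _ = ‖Anext - Aj‖^2 * (‖Tc‖^2 * s) := by ring
        _ = ‖Anext - Aj‖^2 := by rw [hinv, mul_one]
    have h3 : (1/(2*s)) * (‖Anext - Aj‖^2 - ‖T (Anext - Aj)‖^2 * s)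
        = 1/(2*s) * ‖Anext - Aj‖^2 - 1/2 * ‖T (Anext - Aj)‖^2 := by
      field_simp
    have h2 : 0 ≤ (1/(2*s)) * (‖Anext - Aj‖^2 - ‖T (Anext - Aj)‖^2 * s) :=
      mul_nonneg h2s.le (by linarith)
    linarith [h2, h3]
  calc Φ Anext ≤ Ψs Anext := hΦN
  _ ≤ Ψs Aj := hΨmono
  _ = Φ Aj := hΨAj
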